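/- Let Γ be a divisible linearly ordered abelian group and let A ⊆ Γ be a cut: A is nonempty and downward closed, its complement is nonempty, A has no maximum, and Γ \ A has no minimum. Then the set p = {γ ∈ Γ : γ > 0 and A + γ ≠ A} is a saturated (equivalently, prime) ideal of the monoid of positive elements: it is closed under adding arbitrary non-negative elements, and for every positive integer n and γ > 0, if n•γ ∈ p then γ ∈ p. -/

import Mathlib

/-- For a cut `A` of a divisible linearly ordered abelian group `Γ`, the set
`p = {γ > 0 | A + γ ≠ A}` is an ideal of the monoid of positive elements, and it is
saturated (equivalently, prime). -/
theorem stmt_10 {Γ : Type*} [AddCommGroup Γ] [LinearOrder Γ] [IsOrderedAddMonoid Γ]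
    (hdiv : ∀ (x : Γ) (n : ℕ), 0 < n → ∃ y : Γ, n • y = x)
    (A : Set Γ) (hne : A.Nonempty) (hdc : ∀ a ∈ A, ∀ b : Γ, b ≤ a → b ∈ A)
    (hne' : Aᶜ.Nonempty)
    (hnomax : ¬ ∃ a ∈ A, ∀ a' ∈ A, a' ≤ a)
    (hnomin : ¬ ∃ b ∈ Aᶜ, ∀ b' ∈ Aᶜ, b ≤ b') :
    (∀ γ ∈ {γ : Γ | 0 < γ ∧ (fun a => a + γ) '' A ≠ A}, ∀ δ : Γ, 0 ≤ δ →
      γ + δ ∈ {γ : Γ | 0 < γ ∧ (fun a => a + γ) '' A ≠ A}) ∧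
    (∀ (n : ℕ) (γ : Γ), 0 < n → 0 < γ →
      n • γ ∈ {γ : Γ | 0 < γ ∧ (fun a => a + γ) '' A ≠ A} →
      γ ∈ {γ : Γ | 0 < γ ∧ (fun a => a + γ) '' A ≠ A}) := by
  have key : ∀ γ : Γ, 0 ≤ γ → (((fun a => a + γ) '' A = A) ↔ ∀ a ∈ A, a + γ ∈ A) := by
    intro γ hγ
    constructor
    · intro h a ha
      rw [← h]; exact ⟨a, ha, rfl⟩
    · intro h
      apply Set.Subset.antisymm
      · rintro _ ⟨a, ha, rfl⟩; exact h a ha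
      · intro a ha
        exact ⟨a - γ, hdc a ha _ (sub_le_self a hγ), by simp⟩
  constructor
  · rintro γ ⟨hγ, hA⟩ δ hδ
    refine ⟨by positivity, fun h => hA ?_⟩
    rw [key γ hγ.le]
    intro a ha
    have := (key (γ + δ) (by positivity)).1 h a ha
    exact hdc _ this _ (by simp [add_assoc, hδ])
  · rintro n γ hn hγ ⟨hnγ, hA⟩
    refine ⟨hγ, fun h => hA ?_⟩
    rw [key _ hnγ.le]
    intro a ha
    have hstep := (key γ hγ.le).1 h
    clear hA hnγ hn
    induction n with
    | zero => simpa using ha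
    | succ m ih =>
      have := hstep _ ih
      rw [succ_nsmul, ← add_assoc]
      exact this
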